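/- If σ ∈ GL(2g₀,ℝ) is symmetric positive definite, then the symplectic matrix P⁻¹(σ) = G⁻¹(σ, −J(σ⁻¹)ᵀJ) is symmetric positive definite. Hence P restricts to a bijection from the symmetric positive definite symplectic matrices of the special block form onto Sym_{>0}(2g₀,ℝ). -/

import Mathlib

open Matrix

/-- The space 𝒱 of 4g₀×4g₀ matrices of the block form
[[α,β,γ,δ],[β,α,−δ,−γ],[π,ρ,ξ,η],[−ρ,−π,η,ξ]]. -/
def Vspace (g₀ : ℕ) (R : Type*) [Ring R] :
    Set (Matrix ((Fin g₀ ⊕ Fin g₀) ⊕ (Fin g₀ ⊕ Fin g₀))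
      ((Fin g₀ ⊕ Fin g₀) ⊕ (Fin g₀ ⊕ Fin g₀)) R) :=
  {S | ∃ a b c d p r x e : Matrix (Fin g₀) (Fin g₀) R,
    S = Matrix.fromBlocks (Matrix.fromBlocks a b b a) (Matrix.fromBlocks c d (-d) (-c))
      (Matrix.fromBlocks p r (-r) (-p)) (Matrix.fromBlocks x e e x)}

/-- First component of the map G: [[α+β, γ−δ],[π+ρ, ξ−η]]. -/
def gg1 {g₀ : ℕ} {R : Type*} [Ring R]
    (S : Matrix ((Fin g₀ ⊕ Fin g₀) ⊕ (Fin g₀ ⊕ Fin g₀))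
      ((Fin g₀ ⊕ Fin g₀) ⊕ (Fin g₀ ⊕ Fin g₀)) R) :
    Matrix (Fin g₀ ⊕ Fin g₀) (Fin g₀ ⊕ Fin g₀) R :=
  Matrix.fromBlocks
    (S.submatrix (Sum.inl ∘ Sum.inl) (Sum.inl ∘ Sum.inl) +
      S.submatrix (Sum.inl ∘ Sum.inl) (Sum.inl ∘ Sum.inr))
    (S.submatrix (Sum.inl ∘ Sum.inl) (Sum.inr ∘ Sum.inl) -
      S.submatrix (Sum.inl ∘ Sum.inl) (Sum.inr ∘ Sum.inr))
    (S.submatrix (Sum.inr ∘ Sum.inl) (Sum.inl ∘ Sum.inl) +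
      S.submatrix (Sum.inr ∘ Sum.inl) (Sum.inl ∘ Sum.inr))
    (S.submatrix (Sum.inr ∘ Sum.inl) (Sum.inr ∘ Sum.inl) -
      S.submatrix (Sum.inr ∘ Sum.inl) (Sum.inr ∘ Sum.inr))

/-- Second component of the map G: [[α−β, γ+δ],[π−ρ, ξ+η]]. -/
def gg2 {g₀ : ℕ} {R : Type*} [Ring R]
    (S : Matrix ((Fin g₀ ⊕ Fin g₀) ⊕ (Fin g₀ ⊕ Fin g₀))
      ((Fin g₀ ⊕ Fin g₀) ⊕ (Fin g₀ ⊕ Fin g₀)) R) :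
    Matrix (Fin g₀ ⊕ Fin g₀) (Fin g₀ ⊕ Fin g₀) R :=
  Matrix.fromBlocks
    (S.submatrix (Sum.inl ∘ Sum.inl) (Sum.inl ∘ Sum.inl) -
      S.submatrix (Sum.inl ∘ Sum.inl) (Sum.inl ∘ Sum.inr))
    (S.submatrix (Sum.inl ∘ Sum.inl) (Sum.inr ∘ Sum.inl) +
      S.submatrix (Sum.inl ∘ Sum.inl) (Sum.inr ∘ Sum.inr))
    (S.submatrix (Sum.inr ∘ Sum.inl) (Sum.inl ∘ Sum.inl) -
      S.submatrix (Sum.inr ∘ Sum.inl) (Sum.inl ∘ Sum.inr))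
    (S.submatrix (Sum.inr ∘ Sum.inl) (Sum.inr ∘ Sum.inl) +
      S.submatrix (Sum.inr ∘ Sum.inl) (Sum.inr ∘ Sum.inr))

/-- The standard symplectic matrix J = [[0,Id],[−Id,0]]. -/
def Jstd (n : Type*) (R : Type*) [Ring R] [DecidableEq n] [Fintype n] :
    Matrix (n ⊕ n) (n ⊕ n) R :=
  Matrix.fromBlocks 0 1 (-1) 0

namespace Stmt14Aux

/-! ### Generic positive-definiteness helpers over ℝ -/

lemma posDef_smul {n : Type*} [Fintype n] {M : Matrix n n ℝ} {c : ℝ}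
    (hc : 0 < c) (hM : M.PosDef) : (c • M).PosDef := by
  have hherm : (c • M).IsHermitian := by
    show (c • M)ᴴ = c • M
    rw [conjTranspose_smul, hM.1.eq]
    simp
  refine posDef_iff_dotProduct_mulVec.mpr ⟨hherm, fun x hx => ?_⟩
  have := hM.dotProduct_mulVec_pos hx
  calc (0:ℝ) < c * dotProduct (star x) (M *ᵥ x) := by positivity
  _ = dotProduct (star x) ((c • M) *ᵥ x) := by
      rw [smul_mulVec, dotProduct_smul]; rfl

lemma posDef_of_smul {n : Type*} [Fintype n] {M : Matrix n n ℝ} {c : ℝ}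
    (hc : 0 < c) (hM : (c • M).PosDef) : M.PosDef := by
  have := posDef_smul (inv_pos.2 hc) hM
  rwa [smul_smul, inv_mul_cancel₀ hc.ne', one_smul] at this

lemma posDef_conj {n : Type*} [Fintype n] [DecidableEq n] {M : Matrix n n ℝ}
    (hM : M.PosDef) (B : Matrix n n ℝ) (hB : IsUnit B) : (Bᵀ * M * B).PosDef := by
  have hBt : Bᵀ = Bᴴ := by
    ext i j; simp [conjTranspose_apply]
  refine posDef_iff_dotProduct_mulVec.mpr
    ⟨by rw [hBt]; exact isHermitian_conjTranspose_mul_mul B hM.1, fun x hx => ?_⟩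
  have hinj : Function.Injective (B.mulVec) := Matrix.mulVec_injective_iff_isUnit.2 hB
  have hBx : B *ᵥ x ≠ 0 := fun h => hx (hinj (by simpa using h))
  have := hM.dotProduct_mulVec_pos hBx
  rw [hBt]
  simpa only [star_mulVec, dotProduct_mulVec, vecMul_vecMul] using this

lemma star_sum_elim {n m : Type*} (x : n → ℝ) (y : m → ℝ) :
    star (Sum.elim x y) = Sum.elim (star x) (star y) := by
  funext i; cases i <;> rfl

lemma posDef_fromBlocks_iff {n m : Type*} [Fintype n] [Fintype m] [DecidableEq n]
    [DecidableEq m] {A : Matrix n n ℝ} {D : Matrix m m ℝ} :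
    (Matrix.fromBlocks A 0 0 D).PosDef ↔ A.PosDef ∧ D.PosDef := by
  have hmv : ∀ (x : n → ℝ) (y : m → ℝ),
      dotProduct (star (Sum.elim x y)) ((Matrix.fromBlocks A 0 0 D) *ᵥ Sum.elim x y)
        = dotProduct (star x) (A *ᵥ x) + dotProduct (star y) (D *ᵥ y) := by
    intro x y
    rw [star_sum_elim]
    simp [fromBlocks_mulVec, sumElim_dotProduct_sumElim]
  constructor
  · intro h
    obtain ⟨h1, h2⟩ := posDef_iff_dotProduct_mulVec.mp h
    have hA : A.IsHermitian := by
      have := congrArg Matrix.toBlocks₁₁ h1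
      simpa [IsHermitian, fromBlocks_conjTranspose, fromBlocks_transpose] using this
    have hD : D.IsHermitian := by
      have := congrArg Matrix.toBlocks₂₂ h1
      simpa [IsHermitian, fromBlocks_conjTranspose, fromBlocks_transpose] using this
    refine ⟨posDef_iff_dotProduct_mulVec.mpr ⟨hA, fun x hx => ?_⟩,
      posDef_iff_dotProduct_mulVec.mpr ⟨hD, fun y hy => ?_⟩⟩
    · have hxe : (Sum.elim x 0 : n ⊕ m → ℝ) ≠ 0 := by
        intro h; apply hx
        funext i; exact congrFun h (Sum.inl i)
      have := h2 hxe
      rw [hmv] at this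
      simpa using this
    · have hye : (Sum.elim 0 y : n ⊕ m → ℝ) ≠ 0 := by
        intro h; apply hy
        funext i; exact congrFun h (Sum.inr i)
      have := h2 hye
      rw [hmv] at this
      simpa using this
  · rintro ⟨hA, hD⟩
    refine posDef_iff_dotProduct_mulVec.mpr ⟨?_, ?_⟩
    · show (Matrix.fromBlocks A 0 0 D)ᴴ = Matrix.fromBlocks A 0 0 D
      rw [fromBlocks_conjTranspose, hA.1.eq, hD.1.eq]
      congr 1 <;> simp
    · intro z hz
      have hzz : z = Sum.elim (z ∘ Sum.inl) (z ∘ Sum.inr) := (Sum.elim_comp_inl_inr z).symm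
      rw [hzz, hmv]
      by_cases h1 : z ∘ Sum.inl = 0
      · have h2 : z ∘ Sum.inr ≠ 0 := by
          intro h2; apply hz
          funext i; cases i with
          | inl i => exact congrFun h1 i
          | inr i => exact congrFun h2 i
        have := hD.dotProduct_mulVec_pos h2
        have h0 : dotProduct (star (z ∘ Sum.inl)) (A *ᵥ (z ∘ Sum.inl)) = 0 := by
          rw [h1]; simp
        linarith
      · have := hA.dotProduct_mulVec_pos h1
        have h0 : 0 ≤ dotProduct (star (z ∘ Sum.inr)) (D *ᵥ (z ∘ Sum.inr)) :=
          hD.posSemidef.dotProduct_mulVec_nonneg _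
        linarith

/-! ### The change-of-basis matrix -/

variable {g₀ : ℕ}

noncomputable def Vm (g₀ : ℕ) : Matrix ((Fin g₀ ⊕ Fin g₀) ⊕ (Fin g₀ ⊕ Fin g₀))
    ((Fin g₀ ⊕ Fin g₀) ⊕ (Fin g₀ ⊕ Fin g₀)) ℝ :=
  fromBlocks (fromBlocks 1 0 1 0) (fromBlocks 1 0 (-1) 0)
    (fromBlocks 0 1 0 (-1)) (fromBlocks 0 1 0 1)

lemma VtV : (Vm g₀)ᵀ * Vm g₀ = (2:ℝ) • 1 := by
  simp [Vm, fromBlocks_transpose, fromBlocks_multiply, ← fromBlocks_one, fromBlocks_smul,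
    fromBlocks_add, two_smul]

lemma VVt : Vm g₀ * (Vm g₀)ᵀ = (2:ℝ) • 1 := by
  simp [Vm, fromBlocks_transpose, fromBlocks_multiply, ← fromBlocks_one, fromBlocks_smul,
    fromBlocks_add, two_smul]

lemma isUnit_Vm : IsUnit (Vm g₀) := by
  have : Vm g₀ * (((1:ℝ)/2) • (Vm g₀)ᵀ) = 1 := by
    rw [Matrix.mul_smul, VVt, smul_smul]; norm_num
  exact @isUnit_of_invertible _ _ _ (invertibleOfRightInverse _ _ this)

lemma isUnit_Vmt : IsUnit (Vm g₀)ᵀ := by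
  have : (Vm g₀)ᵀ * (((1:ℝ)/2) • (Vm g₀)) = 1 := by
    rw [Matrix.mul_smul, VtV, smul_smul]; norm_num
  exact @isUnit_of_invertible _ _ _ (invertibleOfRightInverse _ _ this)

lemma VJV : (Vm g₀)ᵀ * Jstd (Fin g₀ ⊕ Fin g₀) ℝ * Vm g₀
    = (2:ℝ) • fromBlocks 0 (Jstd (Fin g₀) ℝ) (Jstd (Fin g₀) ℝ) 0 := by
  simp [Vm, Jstd, fromBlocks_transpose, fromBlocks_multiply, fromBlocks_smul, fromBlocks_add,
    two_smul, fromBlocks_neg]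

lemma Jg_mul_Jg : Jstd (Fin g₀) ℝ * Jstd (Fin g₀) ℝ = -1 := by
  simp [Jstd, fromBlocks_multiply, ← fromBlocks_one, fromBlocks_neg]

lemma Jg_transpose : (Jstd (Fin g₀) ℝ)ᵀ = -(Jstd (Fin g₀) ℝ) := by
  simp [Jstd, fromBlocks_transpose, fromBlocks_neg]

lemma isUnit_Jg : IsUnit (Jstd (Fin g₀) ℝ) := by
  have : Jstd (Fin g₀) ℝ * (-(Jstd (Fin g₀) ℝ)) = 1 := by
    rw [Matrix.mul_neg, Jg_mul_Jg, neg_neg]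
  exact @isUnit_of_invertible _ _ _ (invertibleOfRightInverse _ _ this)

lemma Jg_mul_Jgt : Jstd (Fin g₀) ℝ * (Jstd (Fin g₀) ℝ)ᵀ = 1 := by
  rw [Jg_transpose, Matrix.mul_neg, Jg_mul_Jg, neg_neg]

/-! ### gg1, gg2 of explicit block matrices -/

lemma gg1_explicit (a b c d p r x e : Matrix (Fin g₀) (Fin g₀) ℝ) :
    gg1 (Matrix.fromBlocks (Matrix.fromBlocks a b b a) (Matrix.fromBlocks c d (-d) (-c))
      (Matrix.fromBlocks p r (-r) (-p)) (Matrix.fromBlocks x e e x))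
    = fromBlocks (a + b) (c - d) (p + r) (x - e) := by
  ext (i | i) (j | j) <;>
    simp [gg1, Matrix.fromBlocks, Matrix.submatrix, sub_eq_add_neg]

lemma gg2_explicit (a b c d p r x e : Matrix (Fin g₀) (Fin g₀) ℝ) :
    gg2 (Matrix.fromBlocks (Matrix.fromBlocks a b b a) (Matrix.fromBlocks c d (-d) (-c))
      (Matrix.fromBlocks p r (-r) (-p)) (Matrix.fromBlocks x e e x))
    = fromBlocks (a - b) (c + d) (p - r) (x + e) := by
  ext (i | i) (j | j) <;>
    simp [gg2, Matrix.fromBlocks, Matrix.submatrix, sub_eq_add_neg]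

/-! ### The key conjugation identity -/

lemma key {S : Matrix ((Fin g₀ ⊕ Fin g₀) ⊕ (Fin g₀ ⊕ Fin g₀))
    ((Fin g₀ ⊕ Fin g₀) ⊕ (Fin g₀ ⊕ Fin g₀)) ℝ} (hS : S ∈ Vspace g₀ ℝ) :
    (Vm g₀)ᵀ * S * Vm g₀ = (2:ℝ) • fromBlocks (gg1 S) 0 0 (gg2 S) := by
  obtain ⟨a, b, c, d, p, r, x, e, rfl⟩ := hS
  rw [gg1_explicit, gg2_explicit]
  simp only [Vm, fromBlocks_transpose, transpose_one, transpose_zero, transpose_neg,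
    fromBlocks_multiply, fromBlocks_smul, fromBlocks_add, Matrix.mul_one,
    Matrix.one_mul, Matrix.mul_neg, Matrix.neg_mul, Matrix.mul_zero, Matrix.zero_mul,
    add_zero, zero_add, neg_neg, smul_zero, two_smul, fromBlocks_inj]
  and_intros <;> try abel
  all_goals convert Matrix.fromBlocks_zero using 2

/-- The inverse map -/
noncomputable def Phi (g₀ : ℕ) (M N : Matrix (Fin g₀ ⊕ Fin g₀) (Fin g₀ ⊕ Fin g₀) ℝ) :
    Matrix ((Fin g₀ ⊕ Fin g₀) ⊕ (Fin g₀ ⊕ Fin g₀)) ((Fin g₀ ⊕ Fin g₀) ⊕ (Fin g₀ ⊕ Fin g₀)) ℝ :=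
  ((1:ℝ)/2) • (Vm g₀ * fromBlocks M 0 0 N * (Vm g₀)ᵀ)

lemma Phi_comp (m₁ m₂ m₃ m₄ n₁ n₂ n₃ n₄ : Matrix (Fin g₀) (Fin g₀) ℝ) :
    Vm g₀ * fromBlocks (fromBlocks m₁ m₂ m₃ m₄) (fromBlocks 0 0 0 0)
        (fromBlocks 0 0 0 0) (fromBlocks n₁ n₂ n₃ n₄) * (Vm g₀)ᵀ
    = fromBlocks (fromBlocks (m₁+n₁) (m₁-n₁) (m₁-n₁) (m₁+n₁))
        (fromBlocks (m₂+n₂) (n₂-m₂) (-(n₂-m₂)) (-(m₂+n₂)))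
        (fromBlocks (m₃+n₃) (m₃-n₃) (-(m₃-n₃)) (-(m₃+n₃)))
        (fromBlocks (m₄+n₄) (n₄-m₄) (n₄-m₄) (m₄+n₄)) := by
  simp only [Vm, fromBlocks_transpose, transpose_one, transpose_zero, transpose_neg,
    fromBlocks_multiply, fromBlocks_add, Matrix.mul_one,
    Matrix.one_mul, Matrix.mul_neg, Matrix.neg_mul, Matrix.mul_zero, Matrix.zero_mul,
    add_zero, zero_add, neg_neg, fromBlocks_inj]
  and_intros <;> try abel
  all_goals first | trivial | convert Matrix.fromBlocks_zero using 2

lemma Phi_mem (M N : Matrix (Fin g₀ ⊕ Fin g₀) (Fin g₀ ⊕ Fin g₀) ℝ) :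
    Phi g₀ M N ∈ Vspace g₀ ℝ := by
  refine ⟨((1:ℝ)/2) • (M.toBlocks₁₁ + N.toBlocks₁₁), ((1:ℝ)/2) • (M.toBlocks₁₁ - N.toBlocks₁₁),
    ((1:ℝ)/2) • (M.toBlocks₁₂ + N.toBlocks₁₂), ((1:ℝ)/2) • (N.toBlocks₁₂ - M.toBlocks₁₂),
    ((1:ℝ)/2) • (M.toBlocks₂₁ + N.toBlocks₂₁), ((1:ℝ)/2) • (M.toBlocks₂₁ - N.toBlocks₂₁),
    ((1:ℝ)/2) • (M.toBlocks₂₂ + N.toBlocks₂₂), ((1:ℝ)/2) • (N.toBlocks₂₂ - M.toBlocks₂₂), ?_⟩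
  conv_lhs => rw [Phi, ← fromBlocks_toBlocks M, ← fromBlocks_toBlocks N,
    show (0 : Matrix (Fin g₀ ⊕ Fin g₀) (Fin g₀ ⊕ Fin g₀) ℝ)
      = fromBlocks 0 0 0 0 from fromBlocks_zero.symm, Phi_comp]
  simp only [fromBlocks_smul, smul_neg]

lemma recon (S : Matrix ((Fin g₀ ⊕ Fin g₀) ⊕ (Fin g₀ ⊕ Fin g₀))
    ((Fin g₀ ⊕ Fin g₀) ⊕ (Fin g₀ ⊕ Fin g₀)) ℝ) :
    ((1:ℝ)/4) • (Vm g₀ * ((Vm g₀)ᵀ * S * Vm g₀) * (Vm g₀)ᵀ) = S := by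
  have h : Vm g₀ * ((Vm g₀)ᵀ * S * Vm g₀) * (Vm g₀)ᵀ
      = (Vm g₀ * (Vm g₀)ᵀ) * S * (Vm g₀ * (Vm g₀)ᵀ) := by
    simp only [Matrix.mul_assoc]
  rw [h, VVt, Matrix.smul_mul, Matrix.mul_smul, Matrix.one_mul, Matrix.mul_one,
    smul_smul, smul_smul]
  norm_num

lemma Phi_recon {S : Matrix ((Fin g₀ ⊕ Fin g₀) ⊕ (Fin g₀ ⊕ Fin g₀))
    ((Fin g₀ ⊕ Fin g₀) ⊕ (Fin g₀ ⊕ Fin g₀)) ℝ} (hS : S ∈ Vspace g₀ ℝ) :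
    Phi g₀ (gg1 S) (gg2 S) = S := by
  have h : (fromBlocks (gg1 S) 0 0 (gg2 S) : Matrix _ _ ℝ)
      = ((1:ℝ)/2) • ((Vm g₀)ᵀ * S * Vm g₀) := by
    rw [key hS, smul_smul]; norm_num
  rw [Phi, h, Matrix.mul_smul, Matrix.smul_mul, smul_smul]
  have := recon (g₀ := g₀) S
  convert this using 2
  norm_num

lemma VtPhiV (M N : Matrix (Fin g₀ ⊕ Fin g₀) (Fin g₀ ⊕ Fin g₀) ℝ) :
    (Vm g₀)ᵀ * Phi g₀ M N * Vm g₀ = (2:ℝ) • fromBlocks M 0 0 N := by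
  rw [Phi, Matrix.mul_smul, Matrix.smul_mul]
  have h : (Vm g₀)ᵀ * (Vm g₀ * fromBlocks M 0 0 N * (Vm g₀)ᵀ) * Vm g₀
      = ((Vm g₀)ᵀ * Vm g₀) * fromBlocks M 0 0 N * ((Vm g₀)ᵀ * Vm g₀) := by
    simp only [Matrix.mul_assoc]
  rw [h, VtV, Matrix.smul_mul, Matrix.mul_smul, Matrix.one_mul, Matrix.mul_one,
    smul_smul, smul_smul]
  norm_num

lemma gg_Phi (M N : Matrix (Fin g₀ ⊕ Fin g₀) (Fin g₀ ⊕ Fin g₀) ℝ) :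
    gg1 (Phi g₀ M N) = M ∧ gg2 (Phi g₀ M N) = N := by
  have h1 := key (Phi_mem M N)
  rw [VtPhiV] at h1
  have h2 : (fromBlocks M 0 0 N : Matrix _ _ ℝ)
      = fromBlocks (gg1 (Phi g₀ M N)) 0 0 (gg2 (Phi g₀ M N)) := by
    have := smul_right_injective
      (Matrix ((Fin g₀ ⊕ Fin g₀) ⊕ (Fin g₀ ⊕ Fin g₀)) ((Fin g₀ ⊕ Fin g₀) ⊕ (Fin g₀ ⊕ Fin g₀)) ℝ)
      (two_ne_zero (α := ℝ)) h1
    exact this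
  rw [fromBlocks_inj] at h2
  exact ⟨h2.1.symm, h2.2.2.2.symm⟩

lemma conj_inj {X Y : Matrix ((Fin g₀ ⊕ Fin g₀) ⊕ (Fin g₀ ⊕ Fin g₀))
    ((Fin g₀ ⊕ Fin g₀) ⊕ (Fin g₀ ⊕ Fin g₀)) ℝ}
    (h : (Vm g₀)ᵀ * X * Vm g₀ = (Vm g₀)ᵀ * Y * Vm g₀) : X = Y := by
  rw [← recon X, ← recon Y, h]

/-! ### The symplectic condition in the new coordinates -/

lemma S_mul_V {S : Matrix ((Fin g₀ ⊕ Fin g₀) ⊕ (Fin g₀ ⊕ Fin g₀))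
    ((Fin g₀ ⊕ Fin g₀) ⊕ (Fin g₀ ⊕ Fin g₀)) ℝ} (hS : S ∈ Vspace g₀ ℝ) :
    S * Vm g₀ = Vm g₀ * fromBlocks (gg1 S) 0 0 (gg2 S) := by
  have h : S * Vm g₀ = ((1:ℝ)/2) • (Vm g₀ * ((Vm g₀)ᵀ * S * Vm g₀)) := by
    rw [← Matrix.mul_assoc, ← Matrix.mul_assoc, ← Matrix.smul_mul, ← Matrix.smul_mul, VVt,
      smul_smul]
    norm_num
  rw [h, key hS, Matrix.mul_smul, smul_smul]
  norm_num

lemma sympl_iff {S : Matrix ((Fin g₀ ⊕ Fin g₀) ⊕ (Fin g₀ ⊕ Fin g₀))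
    ((Fin g₀ ⊕ Fin g₀) ⊕ (Fin g₀ ⊕ Fin g₀)) ℝ} (hS : S ∈ Vspace g₀ ℝ) :
    Sᵀ * Jstd (Fin g₀ ⊕ Fin g₀) ℝ * S = Jstd (Fin g₀ ⊕ Fin g₀) ℝ ↔
      (gg1 S)ᵀ * Jstd (Fin g₀) ℝ * gg2 S = Jstd (Fin g₀) ℝ := by
  set M := gg1 S
  set N := gg2 S
  set J := Jstd (Fin g₀ ⊕ Fin g₀) ℝ
  set Jg := Jstd (Fin g₀) ℝ
  have hconj : (Vm g₀)ᵀ * (Sᵀ * J * S) * Vm g₀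
      = (2:ℝ) • fromBlocks 0 (Mᵀ * Jg * N) (Nᵀ * Jg * M) 0 := by
    have h1 : (Vm g₀)ᵀ * (Sᵀ * J * S) * Vm g₀
        = (S * Vm g₀)ᵀ * J * (S * Vm g₀) := by
      rw [Matrix.transpose_mul]
      simp only [Matrix.mul_assoc]
    rw [h1, S_mul_V hS, Matrix.transpose_mul]
    have h2 : (fromBlocks M 0 0 N)ᵀ * (Vm g₀)ᵀ * J * (Vm g₀ * fromBlocks M 0 0 N)
        = (fromBlocks M 0 0 N)ᵀ * ((Vm g₀)ᵀ * J * Vm g₀) * fromBlocks M 0 0 N := by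
      simp only [Matrix.mul_assoc]
    rw [h2, VJV, Matrix.mul_smul, Matrix.smul_mul]
    congr 1
    rw [fromBlocks_transpose]
    simp [fromBlocks_multiply]
    exact ⟨rfl, rfl⟩
  constructor
  · intro h
    have := hconj
    rw [h, VJV] at this
    have h3 := smul_right_injective
      (Matrix ((Fin g₀ ⊕ Fin g₀) ⊕ (Fin g₀ ⊕ Fin g₀)) ((Fin g₀ ⊕ Fin g₀) ⊕ (Fin g₀ ⊕ Fin g₀)) ℝ)
      (two_ne_zero (α := ℝ)) this
    rw [fromBlocks_inj] at h3
    exact h3.2.1.symm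
  · intro h
    apply conj_inj (g₀ := g₀)
    rw [hconj, VJV]
    congr 1
    rw [fromBlocks_inj]
    refine ⟨rfl, h, ?_, rfl⟩
    have := congrArg Matrix.transpose h
    rw [Matrix.transpose_mul, Matrix.transpose_mul, Matrix.transpose_transpose,
      Jg_transpose] at this
    simp only [Matrix.neg_mul, Matrix.mul_neg, neg_inj] at this
    rw [← Matrix.mul_assoc] at this
    exact this


lemma herm_transpose {n : Type*} {M : Matrix n n ℝ} (h : M.IsHermitian) : Mᵀ = M := by
  have h2 := h.eq
  ext i j
  rw [transpose_apply]
  have h3 := congrFun (congrFun h2 i) j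
  simpa [conjTranspose_apply] using h3

lemma phiPD {g₀ : ℕ} {M N : Matrix (Fin g₀ ⊕ Fin g₀) (Fin g₀ ⊕ Fin g₀) ℝ}
    (hM : M.PosDef) (hN : N.PosDef) : (Phi g₀ M N).PosDef := by
  have hFB : (fromBlocks M 0 0 N).PosDef := posDef_fromBlocks_iff.2 ⟨hM, hN⟩
  have h1 := posDef_conj hFB (Vm g₀)ᵀ isUnit_Vmt
  rw [transpose_transpose] at h1
  have := posDef_smul (show (0:ℝ) < (1:ℝ)/2 by norm_num) h1
  exact this

lemma phiSymm {g₀ : ℕ} {M N : Matrix (Fin g₀ ⊕ Fin g₀) (Fin g₀ ⊕ Fin g₀) ℝ}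
    (hM : Mᵀ = M) (hN : Nᵀ = N) : (Phi g₀ M N)ᵀ = Phi g₀ M N := by
  rw [Phi, transpose_smul, transpose_mul, transpose_mul, transpose_transpose,
    fromBlocks_transpose, transpose_zero, hM, hN, Matrix.mul_assoc]

lemma gg1_posDef {g₀ : ℕ} {S : Matrix ((Fin g₀ ⊕ Fin g₀) ⊕ (Fin g₀ ⊕ Fin g₀))
    ((Fin g₀ ⊕ Fin g₀) ⊕ (Fin g₀ ⊕ Fin g₀)) ℝ} (hSV : S ∈ Vspace g₀ ℝ)
    (hSpd : S.PosDef) : (gg1 S).PosDef := by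
  have h1 := posDef_conj hSpd (Vm g₀) isUnit_Vm
  rw [key hSV] at h1
  have h2 := posDef_of_smul (show (0:ℝ) < 2 by norm_num) h1
  exact (posDef_fromBlocks_iff.1 h2).1

end Stmt14Aux

open Stmt14Aux in
theorem stmt14 (g₀ : ℕ) :
    (∀ σ : Matrix (Fin g₀ ⊕ Fin g₀) (Fin g₀ ⊕ Fin g₀) ℝ, σ.PosDef →
      ∀ S : Matrix ((Fin g₀ ⊕ Fin g₀) ⊕ (Fin g₀ ⊕ Fin g₀))
          ((Fin g₀ ⊕ Fin g₀) ⊕ (Fin g₀ ⊕ Fin g₀)) ℝ,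
        S ∈ Vspace g₀ ℝ →
        Sᵀ * Jstd (Fin g₀ ⊕ Fin g₀) ℝ * S = Jstd (Fin g₀ ⊕ Fin g₀) ℝ →
        gg1 S = σ → gg2 S = -(Jstd (Fin g₀) ℝ * (σ⁻¹)ᵀ * Jstd (Fin g₀) ℝ) →
        Sᵀ = S ∧ S.PosDef) ∧
    Set.BijOn gg1
      {S ∈ Vspace g₀ ℝ |
        Sᵀ * Jstd (Fin g₀ ⊕ Fin g₀) ℝ * S = Jstd (Fin g₀ ⊕ Fin g₀) ℝ ∧ S.PosDef}
      {σ : Matrix (Fin g₀ ⊕ Fin g₀) (Fin g₀ ⊕ Fin g₀) ℝ | σ.PosDef} := by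
  classical
  have hdetJg : IsUnit (Jstd (Fin g₀) ℝ).det := (Matrix.isUnit_iff_isUnit_det _).1 isUnit_Jg
  have hNform : ∀ σ : Matrix (Fin g₀ ⊕ Fin g₀) (Fin g₀ ⊕ Fin g₀) ℝ, σ.PosDef →
      (-(Jstd (Fin g₀) ℝ * (σ⁻¹)ᵀ * Jstd (Fin g₀) ℝ)
        = (Jstd (Fin g₀) ℝ)ᵀ * σ⁻¹ * Jstd (Fin g₀) ℝ) := by
    intro σ hσ
    have hinvt : (σ⁻¹)ᵀ = σ⁻¹ := by
      rw [Matrix.transpose_nonsing_inv, herm_transpose hσ.1]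
    rw [hinvt, Jg_transpose]
    simp [Matrix.neg_mul]
  have hNpd : ∀ σ : Matrix (Fin g₀ ⊕ Fin g₀) (Fin g₀ ⊕ Fin g₀) ℝ, σ.PosDef →
      ((Jstd (Fin g₀) ℝ)ᵀ * σ⁻¹ * Jstd (Fin g₀) ℝ).PosDef := by
    intro σ hσ
    exact posDef_conj hσ.inv _ isUnit_Jg
  have hNsymm : ∀ σ : Matrix (Fin g₀ ⊕ Fin g₀) (Fin g₀ ⊕ Fin g₀) ℝ, σ.PosDef →
      ((Jstd (Fin g₀) ℝ)ᵀ * σ⁻¹ * Jstd (Fin g₀) ℝ)ᵀ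
        = (Jstd (Fin g₀) ℝ)ᵀ * σ⁻¹ * Jstd (Fin g₀) ℝ := by
    intro σ hσ
    have hinvt : (σ⁻¹)ᵀ = σ⁻¹ := by
      rw [Matrix.transpose_nonsing_inv, herm_transpose hσ.1]
    rw [transpose_mul, transpose_mul, transpose_transpose, hinvt, Matrix.mul_assoc]
  constructor
  · intro σ hσ S hSV _hsymp hg1 hg2
    rw [hNform σ hσ] at hg2
    have hS_eq : S = Phi g₀ σ ((Jstd (Fin g₀) ℝ)ᵀ * σ⁻¹ * Jstd (Fin g₀) ℝ) := by
      rw [← Phi_recon hSV, hg1, hg2]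
    constructor
    · rw [hS_eq]
      exact phiSymm (herm_transpose hσ.1) (hNsymm σ hσ)
    · rw [hS_eq]
      exact phiPD hσ (hNpd σ hσ)
  · refine ⟨?_, ?_, ?_⟩
    · rintro S ⟨hSV, _hsymp, hSpd⟩
      exact gg1_posDef hSV hSpd
    · rintro S ⟨hSV, hsymp, hSpd⟩ S' ⟨hSV', hsymp', hSpd'⟩ hgg
      have hMpd : (gg1 S).PosDef := gg1_posDef hSV hSpd
      have e1 : (gg1 S)ᵀ * Jstd (Fin g₀) ℝ * gg2 S = Jstd (Fin g₀) ℝ :=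
        (sympl_iff hSV).1 hsymp
      have e2 : (gg1 S)ᵀ * Jstd (Fin g₀) ℝ * gg2 S' = Jstd (Fin g₀) ℝ := by
        rw [hgg]
        exact (sympl_iff hSV').1 hsymp'
      have hA : IsUnit ((gg1 S)ᵀ * Jstd (Fin g₀) ℝ) :=
        (hMpd.transpose.isUnit).mul isUnit_Jg
      have hAdet : IsUnit ((gg1 S)ᵀ * Jstd (Fin g₀) ℝ).det :=
        (Matrix.isUnit_iff_isUnit_det _).1 hA
      have hgg2 : gg2 S = gg2 S' := by
        calc gg2 S = ((gg1 S)ᵀ * Jstd (Fin g₀) ℝ)⁻¹ * ((gg1 S)ᵀ * Jstd (Fin g₀) ℝ * gg2 S) :=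
              (Matrix.nonsing_inv_mul_cancel_left _ _ hAdet).symm
          _ = ((gg1 S)ᵀ * Jstd (Fin g₀) ℝ)⁻¹ * ((gg1 S)ᵀ * Jstd (Fin g₀) ℝ * gg2 S') := by
              rw [e1, e2]
          _ = gg2 S' := Matrix.nonsing_inv_mul_cancel_left _ _ hAdet
      rw [← Phi_recon hSV, ← Phi_recon hSV', hgg, hgg2]
    · rintro σ hσ
      have hσ' : σ.PosDef := hσ
      set N := (Jstd (Fin g₀) ℝ)ᵀ * σ⁻¹ * Jstd (Fin g₀) ℝ with hN
      have hg := gg_Phi (g₀ := g₀) σ N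
      refine ⟨Phi g₀ σ N, ⟨Phi_mem σ N, ?_, phiPD hσ' (hNpd σ hσ')⟩, hg.1⟩
      rw [sympl_iff (Phi_mem σ N), hg.1, hg.2, herm_transpose hσ'.1]
      have h1 : Jstd (Fin g₀) ℝ * N = σ⁻¹ * Jstd (Fin g₀) ℝ := by
        rw [hN, ← Matrix.mul_assoc, ← Matrix.mul_assoc, Jg_mul_Jgt, Matrix.one_mul]
      rw [Matrix.mul_assoc σ (Jstd (Fin g₀) ℝ) N, h1, ← Matrix.mul_assoc,
        Matrix.mul_nonsing_inv σ ((Matrix.isUnit_iff_isUnit_det σ).1 hσ'.isUnit),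
        Matrix.one_mul]
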